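/- Let u be a function analytic on the half-plane {z ∈ ℂ : Re z > 0}, continuous and bounded on {z ∈ ℂ : Re z ≥ 0, z ≠ 0}. Let r ≥ 0 and M > 0. If |e^{r²z} u(z)| ≤ M for all z with Re z = 0, z ≠ 0, and |e^{r²z} u(z)| ≤ M for all z ∈ (0,∞), then |u(z)| ≤ M exp(−r² Re z) for all z with Re z > 0. -/

import Mathlib

noncomputable section

open Complex

namespace PLGaussianAux

/-- The weight function: `cw z = exp(-log|z|/2) * cos(arg z / 2) = Re (1/√z)`. -/
def cw (z : ℂ) : ℝ :=
  Real.exp (-2⁻¹ * Real.log (‖z‖)) * Real.cos (2⁻¹ * Complex.arg z)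

lemma norm_exp_aux (ε : ℝ) (z : ℂ) :
    ‖Complex.exp (((-ε : ℝ) : ℂ) * Complex.exp (((-2⁻¹ : ℝ) : ℂ) * Complex.log z))‖
      = Real.exp (-ε * cw z) := by
  rw [Complex.norm_exp]
  congr 1
  rw [Complex.re_ofReal_mul, Complex.exp_re, Complex.re_ofReal_mul,
    Complex.im_ofReal_mul, Complex.log_re, Complex.log_im, cw]
  rw [show (-2⁻¹ : ℝ) * Complex.arg z = -(2⁻¹ * Complex.arg z) by ring, Real.cos_neg]

lemma cw_nonneg (z : ℂ) : 0 ≤ cw z := by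
  have h1 := Complex.neg_pi_lt_arg z
  have h2 := Complex.arg_le_pi z
  have hpi := Real.pi_pos
  refine mul_nonneg (Real.exp_pos _).le (Real.cos_nonneg_of_mem_Icc ⟨?_, ?_⟩) <;>
    [linarith; linarith]

lemma half_le_cos {x : ℝ} (hx : |x| ≤ Real.pi / 2) : (2 : ℝ)⁻¹ ≤ Real.cos (2⁻¹ * x) := by
  have h1 : Real.cos (Real.pi / 4) ≤ Real.cos |2⁻¹ * x| := by
    apply Real.cos_le_cos_of_nonneg_of_le_pi (abs_nonneg _)
    · linarith [Real.pi_pos]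
    · rw [abs_mul, _root_.abs_of_nonneg (by norm_num : (0:ℝ) ≤ (2:ℝ)⁻¹)]
      linarith
  rw [Real.cos_abs] at h1
  have h2 : (2 : ℝ)⁻¹ ≤ Real.cos (Real.pi / 4) := by
    rw [Real.cos_pi_div_four]
    have := Real.sq_sqrt (by norm_num : (2:ℝ) ≥ 0)
    nlinarith [Real.sqrt_nonneg 2]
  linarith

lemma cw_lower {z : ℂ} (hz : 0 ≤ z.re) :
    2⁻¹ * Real.exp (-2⁻¹ * Real.log (‖z‖)) ≤ cw z := by
  have harg : |Complex.arg z| ≤ Real.pi / 2 := Complex.abs_arg_le_pi_div_two_iff.2 hz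
  have := half_le_cos harg
  have he := (Real.exp_pos (-2⁻¹ * Real.log (‖z‖))).le
  rw [cw]
  nlinarith

end PLGaussianAux

open PLGaussianAux

/-- **The Phragmén–Lindelöf argument (anly).**  Let `u` be analytic on the half-plane
`{Re z > 0}` and continuous and bounded on `{Re z ≥ 0, z ≠ 0}`, and let `r ≥ 0`,
`M > 0`.  If `|e^{r²z} u(z)| ≤ M` on the imaginary axis (minus the origin) and on
the positive real axis, then `|u(z)| ≤ M exp(-r² Re z)` for all `Re z > 0`. -/
theorem phragmen_lindelof_halfplane_gaussian
    (u : ℂ → ℂ) (r M : ℝ) (hr : 0 ≤ r) (hM : 0 < M)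
    (hanal : DifferentiableOn ℂ u {z : ℂ | 0 < z.re})
    (hcont : ContinuousOn u {z : ℂ | 0 ≤ z.re ∧ z ≠ 0})
    (hbdd : ∃ B : ℝ, ∀ z : ℂ, 0 ≤ z.re → z ≠ 0 → ‖u z‖ ≤ B)
    (him : ∀ z : ℂ, z.re = 0 → z ≠ 0 → ‖Complex.exp ((r ^ 2 : ℝ) * z) * u z‖ ≤ M)
    (hre : ∀ x : ℝ, 0 < x → ‖Complex.exp ((r ^ 2 : ℝ) * (x : ℂ)) * u (x : ℂ)‖ ≤ M) :
    ∀ z : ℂ, 0 < z.re → ‖u z‖ ≤ M * Real.exp (-(r ^ 2) * z.re) := by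
  obtain ⟨B, hB⟩ := hbdd
  set B₀ : ℝ := max B 0 + 1 with hB₀def
  have hB₀pos : 0 < B₀ := by positivity
  have hB₀ : ∀ z : ℂ, 0 ≤ z.re → z ≠ 0 → ‖u z‖ ≤ B₀ := fun z h1 h2 =>
    (hB z h1 h2).trans (by simp only [hB₀def]; linarith [le_max_left B 0])
  set F : ℂ → ℂ := fun z => Complex.exp ((r ^ 2 : ℝ) * z) * u z with hF
  have hFnorm : ∀ z : ℂ, ‖F z‖ = Real.exp (r ^ 2 * z.re) * ‖u z‖ := by
    intro z
    rw [hF]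
    simp only [norm_mul, Complex.norm_exp, Complex.re_ofReal_mul]
  have hFd : DifferentiableOn ℂ F {z : ℂ | 0 < z.re} := by
    apply DifferentiableOn.mul _ hanal
    exact (Complex.differentiable_exp.comp
      ((differentiable_const _).mul differentiable_id)).differentiableOn
  have hFc : ContinuousOn F {z : ℂ | 0 ≤ z.re ∧ z ≠ 0} := by
    apply ContinuousOn.mul _ hcont
    exact (Complex.continuous_exp.comp (continuous_const.mul continuous_id)).continuousOn
  have hFbdd : ∀ z : ℂ, 0 ≤ z.re → z ≠ 0 →
      ‖F z‖ ≤ B₀ * Real.exp (r ^ 2 * ‖z‖) := by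
    intro z h1 h2
    rw [hFnorm]
    have hre_le : z.re ≤ ‖z‖ := Complex.re_le_norm z
    have : Real.exp (r ^ 2 * z.re) ≤ Real.exp (r ^ 2 * ‖z‖) :=
      Real.exp_le_exp.2 (by nlinarith)
    calc Real.exp (r ^ 2 * z.re) * ‖u z‖ ≤ Real.exp (r ^ 2 * ‖z‖) * B₀ :=
          mul_le_mul this (hB₀ z h1 h2) (norm_nonneg _) (Real.exp_pos _).le
      _ = B₀ * Real.exp (r ^ 2 * ‖z‖) := mul_comm _ _
  -- The key intermediate claim
  have key : ∀ z : ℂ, 0 < z.re → ‖F z‖ ≤ M := by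
    intro z hz
    have hzne : z ≠ 0 := fun h => by rw [h] at hz; simp at hz
    -- enough to prove the weighted bound for every ε > 0
    have main : ∀ ε : ℝ, 0 < ε → Real.exp (-ε * cw z) * ‖F z‖ ≤ M := by
      intro ε hε
      set G : ℂ → ℂ := fun w => if w = 0 then 0 else
        Complex.exp (((-ε : ℝ) : ℂ) * Complex.exp (((-2⁻¹ : ℝ) : ℂ) * Complex.log w)) * F w
        with hG
      have hGval : ∀ w : ℂ, w ≠ 0 →
          G w = Complex.exp (((-ε : ℝ) : ℂ) * Complex.exp (((-2⁻¹ : ℝ) : ℂ) * Complex.log w))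
            * F w := fun w hw => if_neg hw
      have hG0 : G 0 = 0 := if_pos rfl
      have hGnorm : ∀ w : ℂ, w ≠ 0 → ‖G w‖ = Real.exp (-ε * cw w) * ‖F w‖ := by
        intro w hw
        rw [hGval w hw, norm_mul, norm_exp_aux]
      have hGle : ∀ w : ℂ, w ≠ 0 → ‖G w‖ ≤ ‖F w‖ := by
        intro w hw
        rw [hGnorm w hw]
        have h1 : Real.exp (-ε * cw w) ≤ 1 := by
          rw [Real.exp_le_one_iff]
          have := cw_nonneg w
          nlinarith
        nlinarith [norm_nonneg (F w)]
      -- differentiability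
      have hGd : DifferentiableOn ℂ G {w : ℂ | 0 < w.re} := by
        have hG'd : DifferentiableOn ℂ (fun w : ℂ =>
            Complex.exp (((-ε : ℝ) : ℂ) * Complex.exp (((-2⁻¹ : ℝ) : ℂ) * Complex.log w)) * F w)
            {w : ℂ | 0 < w.re} := by
          apply DifferentiableOn.mul _ hFd
          intro w hw
          have hws : w ∈ Complex.slitPlane := Or.inl hw
          exact ((((Complex.differentiableAt_log hws).const_mul
            (((-2⁻¹ : ℝ) : ℂ))).cexp.const_mul (((-ε : ℝ) : ℂ))).cexp).differentiableWithinAt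
        exact hG'd.congr fun w hw => hGval w (fun h => by rw [h] at hw; simp at hw)
      -- continuity on the closed half-plane
      have hGc : ContinuousOn G {w : ℂ | 0 ≤ w.re} := by
        intro w hw
        rcases eq_or_ne w 0 with rfl | hwne
        · -- continuity at 0: squeeze argument
          rw [← continuousWithinAt_diff_self, ContinuousWithinAt, hG0,
            tendsto_zero_iff_norm_tendsto_zero]
          set S : Set ℂ := {w : ℂ | 0 ≤ w.re} \ {0} with hSdef
          have hsmall : ∀ᶠ v in nhdsWithin 0 S, ‖v‖ ≤ 1 := by
            have h1 : ∀ᶠ v in nhds (0 : ℂ), ‖v‖ ≤ 1 := by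
              filter_upwards [Metric.closedBall_mem_nhds (0 : ℂ) one_pos] with v hv
              simpa [Complex.dist_eq] using hv
            exact h1.filter_mono nhdsWithin_le_nhds
          apply squeeze_zero' (Filter.Eventually.of_forall fun v => norm_nonneg _)
            (g := fun v => (B₀ * Real.exp (r ^ 2)) *
              Real.exp (-ε * (2⁻¹ * Real.exp (-2⁻¹ * Real.log (‖v‖)))))
          · filter_upwards [hsmall, self_mem_nhdsWithin] with v hv1 hv2
            have hvne : v ≠ 0 := fun h => hv2.2 (by simp [h])
            have hvre : 0 ≤ v.re := hv2.1
            have h1 : Real.exp (-ε * cw v)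
                ≤ Real.exp (-ε * (2⁻¹ * Real.exp (-2⁻¹ * Real.log (‖v‖)))) :=
              Real.exp_le_exp.2 (by nlinarith [cw_lower hvre])
            have h2 : ‖F v‖ ≤ B₀ * Real.exp (r ^ 2) := by
              refine (hFbdd v hvre hvne).trans ?_
              have : Real.exp (r ^ 2 * ‖v‖) ≤ Real.exp (r ^ 2) :=
                Real.exp_le_exp.2 (by nlinarith [norm_nonneg v, sq_nonneg r])
              nlinarith
            rw [hGnorm v hvne]
            calc Real.exp (-ε * cw v) * ‖F v‖
                ≤ Real.exp (-ε * (2⁻¹ * Real.exp (-2⁻¹ * Real.log (‖v‖))))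
                  * (B₀ * Real.exp (r ^ 2)) :=
                  mul_le_mul h1 h2 (norm_nonneg _) (Real.exp_pos _).le
              _ = (B₀ * Real.exp (r ^ 2)) *
                  Real.exp (-ε * (2⁻¹ * Real.exp (-2⁻¹ * Real.log (‖v‖)))) :=
                  mul_comm _ _
          · -- the bound tends to 0
            have t1 : Filter.Tendsto (fun v : ℂ => ‖v‖) (nhdsWithin 0 S)
                (nhdsWithin 0 (Set.Ioi 0)) := by
              refine tendsto_nhdsWithin_iff.2 ⟨?_, ?_⟩
              · exact (continuous_norm.tendsto' 0 0 (by simp)).mono_left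
                  nhdsWithin_le_nhds
              · filter_upwards [self_mem_nhdsWithin] with v hv
                exact norm_pos_iff.mpr fun h => hv.2 (by simp [h])
            have t2 := Real.tendsto_log_nhdsGT_zero.comp t1
            have t3 : Filter.Tendsto (fun y : ℝ => Real.exp (-2⁻¹ * y)) Filter.atBot
                Filter.atTop := by
              apply Real.tendsto_exp_atTop.comp
              have hm : Filter.Tendsto (fun y : ℝ => 2⁻¹ * y) Filter.atBot Filter.atBot :=
                Filter.Tendsto.const_mul_atBot (by norm_num) Filter.tendsto_id
              have h4 : Filter.Tendsto (fun y : ℝ => -(2⁻¹ * y)) Filter.atBot Filter.atTop :=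
                Filter.tendsto_neg_atBot_atTop.comp hm
              convert h4 using 2 with y
              ring
            have tE := t3.comp t2
            have h4 : Filter.Tendsto (fun y : ℝ => Real.exp (-ε * (2⁻¹ * y))) Filter.atTop
                (nhds 0) := by
              have h5 : Filter.Tendsto (fun y : ℝ => (ε * 2⁻¹) * y) Filter.atTop
                  Filter.atTop := Filter.Tendsto.const_mul_atTop (by positivity) Filter.tendsto_id
              have h6 := Real.tendsto_exp_neg_atTop_nhds_zero.comp h5
              convert h6 using 2 with y
              simp only [Function.comp_apply]
              ring_nf
            have h7 := (h4.comp tE).const_mul (B₀ * Real.exp (r ^ 2))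
            simpa using h7
        · -- continuity away from 0
          have hws : w ∈ Complex.slitPlane := by
            rcases lt_or_eq_of_le (show (0:ℝ) ≤ w.re from hw) with h | h
            · exact Or.inl h
            · exact Or.inr fun him0 => hwne (Complex.ext h.symm him0)
          have hcont' : ContinuousWithinAt (fun v : ℂ =>
              Complex.exp (((-ε : ℝ) : ℂ) * Complex.exp (((-2⁻¹ : ℝ) : ℂ) * Complex.log v)) * F v)
              {v : ℂ | 0 ≤ v.re} w := by
            apply ContinuousWithinAt.mul
            · exact ((continuousAt_const.mul ((continuousAt_const.mul
                (continuousAt_clog hws)).cexp)).cexp).continuousWithinAt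
            · have h1 := hFc w ⟨hw, hwne⟩
              apply h1.mono_of_mem_nhdsWithin
              have hne : {v : ℂ | v ≠ 0} ∈ nhds w := IsOpen.mem_nhds isOpen_ne hwne
              have h2 : {v : ℂ | v ≠ 0} ∩ {v : ℂ | 0 ≤ v.re} ∈
                  nhdsWithin w {v : ℂ | 0 ≤ v.re} :=
                Filter.inter_mem (mem_nhdsWithin_of_mem_nhds hne) self_mem_nhdsWithin
              exact Filter.mem_of_superset h2 fun v hv => ⟨hv.2, hv.1⟩
          apply hcont'.congr_of_eventuallyEq
          · have hne : {v : ℂ | v ≠ 0} ∈ nhds w := IsOpen.mem_nhds isOpen_ne hwne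
            filter_upwards [mem_nhdsWithin_of_mem_nhds hne] with v hv
            exact hGval v hv
          · exact hGval w hwne
      -- boundary estimates
      have hbre : ∀ x : ℝ, 0 ≤ x → ‖G (x : ℂ)‖ ≤ M := by
        intro x hx
        rcases eq_or_lt_of_le hx with h | h
        · rw [← h]
          simp only [Complex.ofReal_zero, hG0, norm_zero]
          exact hM.le
        · have hne : (x : ℂ) ≠ 0 := Complex.ofReal_ne_zero.2 h.ne'
          exact (hGle _ hne).trans (hre x h)
      have hbim : ∀ x : ℝ, x ≠ 0 → ‖G ((x : ℂ) * I)‖ ≤ M := by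
        intro x hx
        have hne : (x : ℂ) * I ≠ 0 := mul_ne_zero (Complex.ofReal_ne_zero.2 hx) Complex.I_ne_zero
        have hre0 : ((x : ℂ) * I).re = 0 := by simp
        exact (hGle _ hne).trans (him _ hre0 hne)
      have hbim' : ∀ x : ℝ, ‖G ((x : ℂ) * I)‖ ≤ M := by
        intro x
        rcases eq_or_ne x 0 with rfl | hx
        · simp only [Complex.ofReal_zero, zero_mul, hG0, norm_zero]
          exact hM.le
        · exact hbim x hx
      -- growth estimate
      have hO : ∀ Q : Set ℂ, Q ⊆ {w : ℂ | 0 < w.re} →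
          ∃ c < (2 : ℝ), ∃ Bc, G =O[Bornology.cobounded ℂ ⊓ Filter.principal Q]
            fun w => Real.exp (Bc * ‖w‖ ^ c) := by
        intro Q hQ
        refine ⟨1, one_lt_two, r ^ 2, Asymptotics.IsBigO.of_bound B₀ ?_⟩
        apply Filter.Eventually.filter_mono inf_le_right
        rw [Filter.eventually_principal]
        intro w hw
        have h1 : 0 < w.re := hQ hw
        have hne : w ≠ 0 := fun h => by rw [h] at h1; simp at h1
        have h2 := (hGle w hne).trans (hFbdd w h1.le hne)
        simpa [Real.norm_eq_abs, Real.abs_exp, Real.rpow_one] using h2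
      -- apply Phragmén–Lindelöf on the appropriate quadrant
      have hclosed : IsClosed {w : ℂ | 0 ≤ w.re} :=
        isClosed_le continuous_const Complex.continuous_re
      have hGboundM : ‖G z‖ ≤ M := by
        rcases lt_trichotomy z.im 0 with h | h | h
        · -- fourth quadrant
          have hsub : Set.Ioi (0:ℝ) ×ℂ Set.Iio (0:ℝ) ⊆ {w : ℂ | 0 < w.re} :=
            fun w hw => (Complex.mem_reProdIm.1 hw).1
          have hclo : closure (Set.Ioi (0:ℝ) ×ℂ Set.Iio (0:ℝ)) ⊆ {w : ℂ | 0 ≤ w.re} :=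
            closure_minimal (fun w hw => show (0:ℝ) ≤ w.re from (hsub hw).le) hclosed
          exact PhragmenLindelof.quadrant_IV ⟨hGd.mono hsub, hGc.mono hclo⟩
            (hO _ hsub) hbre (fun x _ => hbim' x) hz.le h.le
        · -- real axis: direct
          have hz' : z = ((z.re : ℝ) : ℂ) := Complex.ext (by simp) (by simp [h])
          rw [hz']
          exact hbre z.re hz.le
        · -- first quadrant
          have hsub : Set.Ioi (0:ℝ) ×ℂ Set.Ioi (0:ℝ) ⊆ {w : ℂ | 0 < w.re} :=
            fun w hw => (Complex.mem_reProdIm.1 hw).1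
          have hclo : closure (Set.Ioi (0:ℝ) ×ℂ Set.Ioi (0:ℝ)) ⊆ {w : ℂ | 0 ≤ w.re} :=
            closure_minimal (fun w hw => show (0:ℝ) ≤ w.re from (hsub hw).le) hclosed
          exact PhragmenLindelof.quadrant_I ⟨hGd.mono hsub, hGc.mono hclo⟩
            (hO _ hsub) hbre (fun x _ => hbim' x) hz.le h.le
      rw [← hGnorm z hzne]
      exact hGboundM
    -- take the limit ε → 0⁺
    have hlim : Filter.Tendsto (fun ε : ℝ => Real.exp (-ε * cw z) * ‖F z‖)
        (nhdsWithin 0 (Set.Ioi 0)) (nhds (‖F z‖)) := by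
      have hc : Continuous (fun ε : ℝ => Real.exp (-ε * cw z) * ‖F z‖) := by
        continuity
      have h1 := hc.tendsto 0
      simp only [neg_zero, zero_mul, Real.exp_zero, one_mul] at h1
      exact h1.mono_left nhdsWithin_le_nhds
    refine le_of_tendsto hlim ?_
    filter_upwards [self_mem_nhdsWithin] with ε hε
    exact main ε hε
  -- conclude
  intro z hz
  have hk := key z hz
  rw [hFnorm] at hk
  have h1 : Real.exp (-(r ^ 2) * z.re) * Real.exp (r ^ 2 * z.re) = 1 := by
    rw [← Real.exp_add]
    ring_nf
    exact Real.exp_zero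
  nlinarith [Real.exp_pos (-(r ^ 2) * z.re), Real.exp_pos (r ^ 2 * z.re), norm_nonneg (u z)]
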